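/- Let φ be real-analytic near 0 with φ(0) = 0 and φ'(0) = a₁ > 0, let r = e^{s} and let τ(s) solve dτ/ds = φ(τ) with τ → 0 as s → −∞. If the limit L = lim_{s→−∞} φ(τ(s))/r² exists in (0, ∞), then a₁ = 2. Conversely if a₁ = 2 then the limit lim_{s→−∞} φ(τ(s))/e^{2s} exists and is positive. -/

import Mathlib

open Filter Real Set

lemma stmt_11_key (φ : ℝ → ℝ) (a₁ δ s₁ : ℝ) (ha₁ : 0 < a₁) (hδ : 0 < δ)
    (hφ : AnalyticAt ℝ φ 0) (hφ0 : φ 0 = 0) (hφ' : deriv φ 0 = a₁)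
    (τ : ℝ → ℝ) (hτmem : ∀ s < s₁, τ s ∈ Set.Ioo 0 δ)
    (hode : ∀ s < s₁, HasDerivAt τ (φ (τ s)) s)
    (hlim : Filter.Tendsto τ Filter.atBot (nhds 0)) :
    ∃ C : ℝ, 0 < C ∧
      Filter.Tendsto (fun s => φ (τ s) / Real.exp (a₁ * s)) Filter.atBot (nhds C) := by
  -- deriv φ is C¹ at 0, hence locally Lipschitz
  have hcd : ContDiffAt ℝ 1 (deriv φ) 0 := by
    have h1 : AnalyticAt ℝ (fderiv ℝ φ) 0 := hφ.fderiv
    have h2 : AnalyticAt ℝ (fun y => fderiv ℝ φ y 1) 0 :=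
      ((ContinuousLinearMap.apply ℝ ℝ (1:ℝ)).analyticAt _).comp h1
    have h3 : (deriv φ) = fun y => fderiv ℝ φ y 1 := by
      funext y; rw [fderiv_apply_one_eq_deriv]
    rw [h3]; exact h2.contDiffAt
  obtain ⟨K, t, ht, hK⟩ := hcd.exists_lipschitzOnWith
  obtain ⟨ε₀, hε₀, hball⟩ := Metric.mem_nhds_iff.mp ht
  obtain ⟨ε₁, hε₁, hana⟩ := Metric.eventually_nhds_iff.mp hφ.eventually_analyticAt
  set ε : ℝ := min (min (ε₀/2) (ε₁/2)) (a₁/(2*((K:ℝ)+1))) with hεdef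
  have hε : 0 < ε := by
    apply lt_min (lt_min (by linarith) (by linarith))
    positivity
  have hεε₀ : ε < ε₀ := lt_of_le_of_lt ((min_le_left _ _).trans (min_le_left _ _)) (by linarith)
  have hεε₁ : ε < ε₁ := lt_of_le_of_lt ((min_le_left _ _).trans (min_le_right _ _)) (by linarith)
  have hKε : (K:ℝ) * ε ≤ a₁ / 2 := by
    have h1 : ε ≤ a₁/(2*((K:ℝ)+1)) := min_le_right _ _
    have hK0 : (0:ℝ) ≤ (K:ℝ) := K.coe_nonneg
    have := mul_le_mul_of_nonneg_left h1 hK0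
    calc (K:ℝ) * ε ≤ (K:ℝ) * (a₁/(2*((K:ℝ)+1))) := this
      _ ≤ a₁ / 2 := by
          have he : (K:ℝ) * (a₁/(2*((K:ℝ)+1))) = ((K:ℝ)*a₁)/(2*((K:ℝ)+1)) := by ring
          rw [he, div_le_div_iff₀ (by positivity) (by norm_num : (0:ℝ) < 2)]
          nlinarith
  -- derivative bound near 0
  have hmemt : ∀ x : ℝ, x ∈ Icc (0:ℝ) ε → x ∈ t := by
    intro x hx
    apply hball
    simp only [Metric.mem_ball, Real.dist_eq, sub_zero]
    rw [abs_of_nonneg hx.1]; exact lt_of_le_of_lt hx.2 hεε₀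
  have hder : ∀ x ∈ Icc (0:ℝ) ε, |deriv φ x - a₁| ≤ (K:ℝ) * x := by
    intro x hx
    have := hK.dist_le_mul x (hmemt x hx) 0 (hmemt 0 ⟨le_refl _, le_of_lt hε⟩)
    rw [Real.dist_eq, Real.dist_eq, sub_zero, hφ', abs_of_nonneg hx.1] at this
    exact this
  have hderlow : ∀ x ∈ Icc (0:ℝ) ε, |deriv φ x - a₁| ≤ a₁ / 2 := by
    intro x hx
    exact (hder x hx).trans ((mul_le_mul_of_nonneg_left hx.2 K.coe_nonneg).trans hKε)
  -- analyticity near 0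
  have hana' : ∀ x ∈ Icc (0:ℝ) ε, AnalyticAt ℝ φ x := by
    intro x hx
    apply hana
    rw [Real.dist_eq, sub_zero, abs_of_nonneg hx.1]
    exact lt_of_le_of_lt hx.2 hεε₁
  -- bounds on φ itself on [0, ε]
  have hφbd : ∀ x ∈ Icc (0:ℝ) ε, |φ x - a₁ * x| ≤ (a₁/2) * x := by
    intro x hx
    have key := Convex.norm_image_sub_le_of_norm_hasDerivWithin_le
      (f := fun y => φ y - a₁ * y) (f' := fun y => deriv φ y - a₁) (s := Icc (0:ℝ) ε)
      (C := a₁/2)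
      (fun y hy => by
        have h1 : HasDerivAt φ (deriv φ y) y := ((hana' y hy).differentiableAt).hasDerivAt
        have h2 : HasDerivAt (fun y : ℝ => a₁ * y) a₁ y := by
          simpa using (hasDerivAt_id y).const_mul a₁
        exact (h1.sub h2).hasDerivWithinAt)
      (fun y hy => by simpa [Real.norm_eq_abs] using hderlow y hy)
      (convex_Icc _ _) ⟨le_refl _, le_of_lt hε⟩ hx
    simpa [Real.norm_eq_abs, hφ0, abs_of_nonneg hx.1] using key
  have hφlow : ∀ x ∈ Icc (0:ℝ) ε, (a₁/2) * x ≤ φ x := by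
    intro x hx
    have := abs_le.mp (hφbd x hx)
    linarith [this.1]
  -- find s₂ below which τ lands in (0, ε)
  have hev : ∀ᶠ s in atBot, dist (τ s) 0 < ε ∧ s < s₁ :=
    (Metric.tendsto_nhds.mp hlim ε hε).and (eventually_lt_atBot s₁)
  obtain ⟨s₂, hs₂⟩ := eventually_atBot.mp hev
  -- basic facts for s ≤ s₂
  have hτIoo : ∀ s ≤ s₂, τ s ∈ Ioo (0:ℝ) ε := by
    intro s hs
    obtain ⟨h1, h2⟩ := hs₂ s hs
    obtain ⟨h3, _⟩ := hτmem s h2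
    rw [Real.dist_eq, sub_zero, abs_of_pos h3] at h1
    exact ⟨h3, h1⟩
  have hτIcc : ∀ s ≤ s₂, τ s ∈ Icc (0:ℝ) ε := fun s hs =>
    ⟨le_of_lt (hτIoo s hs).1, le_of_lt (hτIoo s hs).2⟩
  have hφτpos : ∀ s ≤ s₂, 0 < φ (τ s) := by
    intro s hs
    have := hφlow _ (hτIcc s hs)
    nlinarith [(hτIoo s hs).1]
  -- derivative of F s = log (φ (τ s)) - a₁ s
  have hF : ∀ s ≤ s₂, HasDerivAt (fun u => Real.log (φ (τ u)) - a₁ * u)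
      (deriv φ (τ s) - a₁) s := by
    intro s hs
    have hφd : HasDerivAt φ (deriv φ (τ s)) (τ s) :=
      ((hana' _ (hτIcc s hs)).differentiableAt).hasDerivAt
    have hcomp : HasDerivAt (fun u => φ (τ u)) (deriv φ (τ s) * φ (τ s)) s :=
      hφd.comp s (hode s (hs₂ s hs).2)
    have hlog := hcomp.log (ne_of_gt (hφτpos s hs))
    have hid : HasDerivAt (fun u : ℝ => a₁ * u) a₁ s := by
      simpa using (hasDerivAt_id s).const_mul a₁
    have := hlog.sub hid
    have heq : deriv φ (τ s) * φ (τ s) / φ (τ s) - a₁ = deriv φ (τ s) - a₁ := by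
      rw [mul_div_assoc, div_self (ne_of_gt (hφτpos s hs)), mul_one]
    rwa [heq] at this
  -- derivative of G s = log (τ s) - (a₁/2) s, and monotonicity
  have hG : ∀ s ≤ s₂, HasDerivAt (fun u => Real.log (τ u) - a₁/2 * u)
      (φ (τ s) / τ s - a₁/2) s := by
    intro s hs
    have hlog := (hode s (hs₂ s hs).2).log (ne_of_gt (hτIoo s hs).1)
    have hid : HasDerivAt (fun u : ℝ => a₁/2 * u) (a₁/2) s := by
      simpa using (hasDerivAt_id s).const_mul (a₁/2)
    exact hlog.sub hid
  have hGmono : MonotoneOn (fun u => Real.log (τ u) - a₁/2 * u) (Iic s₂) := by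
    apply monotoneOn_of_hasDerivWithinAt_nonneg (convex_Iic s₂)
      (f' := fun s => φ (τ s) / τ s - a₁/2)
    · intro s hs
      exact ((hG s hs).continuousAt).continuousWithinAt
    · intro s hs
      rw [interior_Iic] at hs
      exact ((hG s (le_of_lt hs)).hasDerivWithinAt)
    · intro s hs
      rw [interior_Iic] at hs
      have hlow := hφlow _ (hτIcc s (le_of_lt hs))
      have hpos := (hτIoo s (le_of_lt hs)).1
      rw [sub_nonneg, le_div_iff₀ hpos]
      linarith
  -- exponential bound on τ
  set C₁ : ℝ := Real.exp (Real.log (τ s₂) - a₁/2 * s₂) with hC₁def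
  have hτbd : ∀ s ≤ s₂, τ s ≤ C₁ * Real.exp (a₁/2 * s) := by
    intro s hs
    have h1 : Real.log (τ s) - a₁/2 * s ≤ Real.log (τ s₂) - a₁/2 * s₂ :=
      hGmono hs (le_refl s₂) hs
    have h2 : τ s = Real.exp (Real.log (τ s)) := (Real.exp_log (hτIoo s hs).1).symm
    rw [h2, hC₁def, ← Real.exp_add]
    apply Real.exp_le_exp.mpr
    linarith
  have hC₁pos : 0 < C₁ := Real.exp_pos _
  -- the comparison functions
  set k : ℝ := a₁/2 with hkdef
  have hk : 0 < k := by positivity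
  set B : ℝ := ((K:ℝ) * C₁) / k with hBdef
  have hB : 0 ≤ B := by positivity
  set F : ℝ → ℝ := fun u => Real.log (φ (τ u)) - a₁ * u with hFdef
  have hFbd : ∀ s ≤ s₂, |deriv φ (τ s) - a₁| ≤ (K:ℝ) * C₁ * Real.exp (k * s) := by
    intro s hs
    calc |deriv φ (τ s) - a₁| ≤ (K:ℝ) * τ s := hder _ (hτIcc s hs)
      _ ≤ (K:ℝ) * (C₁ * Real.exp (k * s)) :=
          mul_le_mul_of_nonneg_left (hτbd s hs) K.coe_nonneg
      _ = (K:ℝ) * C₁ * Real.exp (k * s) := by ring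
  have hHp : ∀ s ≤ s₂, HasDerivAt (fun u => F u + B * Real.exp (k * u))
      ((deriv φ (τ s) - a₁) + (K:ℝ) * C₁ * Real.exp (k * s)) s := by
    intro s hs
    have he : HasDerivAt (fun u : ℝ => B * Real.exp (k * u)) (B * (k * Real.exp (k * s))) s := by
      have : HasDerivAt (fun u : ℝ => Real.exp (k * u)) (Real.exp (k * s) * k) s :=
        (Real.hasDerivAt_exp (k*s)).comp s (by simpa using (hasDerivAt_id s).const_mul k)
      simpa [mul_comm, mul_assoc, mul_left_comm] using this.const_mul B
    have heq : B * (k * Real.exp (k * s)) = (K:ℝ) * C₁ * Real.exp (k * s) := by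
      rw [hBdef]; field_simp
    rw [heq] at he
    exact (hF s hs).add he
  have hHm : ∀ s ≤ s₂, HasDerivAt (fun u => F u - B * Real.exp (k * u))
      ((deriv φ (τ s) - a₁) - (K:ℝ) * C₁ * Real.exp (k * s)) s := by
    intro s hs
    have he : HasDerivAt (fun u : ℝ => B * Real.exp (k * u)) (B * (k * Real.exp (k * s))) s := by
      have : HasDerivAt (fun u : ℝ => Real.exp (k * u)) (Real.exp (k * s) * k) s :=
        (Real.hasDerivAt_exp (k*s)).comp s (by simpa using (hasDerivAt_id s).const_mul k)
      simpa [mul_comm, mul_assoc, mul_left_comm] using this.const_mul B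
    have heq : B * (k * Real.exp (k * s)) = (K:ℝ) * C₁ * Real.exp (k * s) := by
      rw [hBdef]; field_simp
    rw [heq] at he
    exact (hF s hs).sub he
  have hHpmono : MonotoneOn (fun u => F u + B * Real.exp (k * u)) (Iic s₂) := by
    apply monotoneOn_of_hasDerivWithinAt_nonneg (convex_Iic s₂)
      (f' := fun s => (deriv φ (τ s) - a₁) + (K:ℝ) * C₁ * Real.exp (k * s))
    · intro s hs; exact ((hHp s hs).continuousAt).continuousWithinAt
    · intro s hs; rw [interior_Iic] at hs
      exact (hHp s (le_of_lt hs)).hasDerivWithinAt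
    · intro s hs; rw [interior_Iic] at hs
      have := abs_le.mp (hFbd s (le_of_lt hs))
      linarith [this.1]
  have hHmanti : AntitoneOn (fun u => F u - B * Real.exp (k * u)) (Iic s₂) := by
    apply antitoneOn_of_hasDerivWithinAt_nonpos (convex_Iic s₂)
      (f' := fun s => (deriv φ (τ s) - a₁) - (K:ℝ) * C₁ * Real.exp (k * s))
    · intro s hs; exact ((hHm s hs).continuousAt).continuousWithinAt
    · intro s hs; rw [interior_Iic] at hs
      exact (hHm s (le_of_lt hs)).hasDerivWithinAt
    · intro s hs; rw [interior_Iic] at hs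
      have := abs_le.mp (hFbd s (le_of_lt hs))
      linarith [this.2]
  -- globalize and take limit
  set M : ℝ → ℝ := fun s => F (min s s₂) + B * Real.exp (k * min s s₂) with hMdef
  have hMmono : Monotone M := by
    intro x y hxy
    exact hHpmono (min_le_right x s₂) (min_le_right y s₂)
      (min_le_min hxy (le_refl s₂))
  have hMbdd : BddBelow (Set.range M) := by
    refine ⟨F s₂ - B * Real.exp (k * s₂), ?_⟩
    rintro _ ⟨s, rfl⟩
    have h1 : F (min s s₂) - B * Real.exp (k * min s s₂) ≥ F s₂ - B * Real.exp (k * s₂) :=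
      hHmanti (min_le_right s s₂) (le_refl s₂) (min_le_right s s₂)
    have h2 : 0 ≤ B * Real.exp (k * min s s₂) := by positivity
    simp only [hMdef]
    linarith
  have hMt : Tendsto M atBot (nhds (⨅ s, M s)) := tendsto_atBot_ciInf hMmono hMbdd
  have hexpt : Tendsto (fun s : ℝ => B * Real.exp (k * s)) atBot (nhds 0) := by
    have h1 : Tendsto (fun s : ℝ => k * s) atBot atBot :=
      Tendsto.const_mul_atBot hk tendsto_id
    have h2 := Real.tendsto_exp_atBot.comp h1
    simpa using h2.const_mul B
  have hFt : Tendsto F atBot (nhds (⨅ s, M s)) := by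
    have h1 : Tendsto (fun s => M s - B * Real.exp (k * s)) atBot (nhds ((⨅ s, M s) - 0)) :=
      hMt.sub hexpt
    rw [sub_zero] at h1
    apply h1.congr'
    filter_upwards [eventually_le_atBot s₂] with s hs
    simp only [hMdef, min_eq_left hs]
    ring
  -- conclude
  refine ⟨Real.exp (⨅ s, M s), Real.exp_pos _, ?_⟩
  have h2 := (Real.continuous_exp.tendsto _).comp hFt
  apply h2.congr'
  filter_upwards [eventually_le_atBot s₂] with s hs
  simp only [Function.comp, hFdef]
  rw [Real.exp_sub, Real.exp_log (hφτpos s hs)]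

/-- Smooth extension criterion: with r = e^s, the limit lim_{s→−∞} φ(τ(s))/r² exists
    and is positive iff a₁ = φ'(0) equals 2. -/
theorem stmt_11 (φ : ℝ → ℝ) (a₁ δ s₁ : ℝ) (ha₁ : 0 < a₁) (hδ : 0 < δ)
    (hφ : AnalyticAt ℝ φ 0) (hφ0 : φ 0 = 0) (hφ' : deriv φ 0 = a₁)
    (τ : ℝ → ℝ) (hτmem : ∀ s < s₁, τ s ∈ Set.Ioo 0 δ)
    (hode : ∀ s < s₁, HasDerivAt τ (φ (τ s)) s)
    (hlim : Filter.Tendsto τ Filter.atBot (nhds 0)) :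
    ((∃ L : ℝ, 0 < L ∧
        Filter.Tendsto (fun s => φ (τ s) / Real.exp s ^ 2) Filter.atBot (nhds L)) →
      a₁ = 2) ∧
    (a₁ = 2 → ∃ L : ℝ, 0 < L ∧
      Filter.Tendsto (fun s => φ (τ s) / Real.exp (2 * s)) Filter.atBot (nhds L)) := by
  obtain ⟨C, hC, hCt⟩ := stmt_11_key φ a₁ δ s₁ ha₁ hδ hφ hφ0 hφ' τ hτmem hode hlim
  constructor
  · rintro ⟨L, hL, hLt⟩
    have hLt' : Tendsto (fun s => φ (τ s) / Real.exp (2 * s)) atBot (nhds L) := by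
      apply hLt.congr
      intro s
      rw [two_mul, Real.exp_add, sq]
    have hev : ∀ᶠ s in atBot, 0 < φ (τ s) := by
      have h1 := hCt.eventually (eventually_gt_nhds (half_lt_self hC))
      filter_upwards [h1] with s hs
      have h2 : 0 < φ (τ s) / Real.exp (a₁ * s) := lt_trans (half_pos hC) hs
      have h3 := mul_pos h2 (Real.exp_pos (a₁ * s))
      rwa [div_mul_cancel₀ _ (Real.exp_pos (a₁ * s)).ne'] at h3
    have hrat : Tendsto (fun s => Real.exp ((a₁ - 2) * s)) atBot (nhds (L / C)) := by
      have h := hLt'.div hCt (ne_of_gt hC)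
      apply h.congr'
      filter_upwards [hev] with s hs
      have h2 : Real.exp (2*s) ≠ 0 := (Real.exp_pos _).ne'
      have ha : Real.exp (a₁*s) ≠ 0 := (Real.exp_pos _).ne'
      have hφne : φ (τ s) ≠ 0 := ne_of_gt hs
      show φ (τ s) / Real.exp (2 * s) / (φ (τ s) / Real.exp (a₁ * s)) = _
      rw [div_div_div_comm, div_self hφne, one_div_div, div_eq_mul_inv, ← Real.exp_neg, ← Real.exp_add]
      congr 1
      ring
    rcases lt_trichotomy a₁ 2 with h | h | h
    · exfalso
      have htop : Tendsto (fun s : ℝ => Real.exp ((a₁ - 2) * s)) atBot atTop := by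
        apply Real.tendsto_exp_atTop.comp
        exact (tendsto_const_mul_atTop_of_neg (by linarith)).mpr tendsto_id
      exact not_tendsto_nhds_of_tendsto_atTop htop _ hrat
    · exact h
    · exfalso
      have hzero : Tendsto (fun s : ℝ => Real.exp ((a₁ - 2) * s)) atBot (nhds 0) := by
        apply Real.tendsto_exp_atBot.comp
        exact (tendsto_const_mul_atBot_of_pos (by linarith)).mpr tendsto_id
      have := tendsto_nhds_unique hrat hzero
      have hLC : 0 < L / C := div_pos hL hC
      linarith
  · intro h
    subst h
    exact ⟨C, hC, hCt⟩
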